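/- Let √17 denote the positive real square root of 17 and let K = Q(α) ⊆ C where α² = −(17 + √17). Then K/Q is a Galois extension of degree 4 with cyclic Galois group, Q(√17) is its unique quadratic subfield, and −1 ∉ N_{K/Q(√17)}(K×). Consequently, for p = 2 and this tower Q ⊂ Q(√17) ⊂ K, one has m(K/Q) = 1. -/

import Mathlib

set_option synthInstance.maxHeartbeats 1000000
set_option maxHeartbeats 1000000

open Polynomial IntermediateField

noncomputable section

private def qZ : ℤ[X] := X^4 + C 34 * X^2 + C 272
private def qQ : ℚ[X] := X^4 + C 34 * X^2 + C 272

private lemma qZ_natDegree : qZ.natDegree = 4 := by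
  unfold qZ
  compute_degree!

private lemma qZ_monic : qZ.Monic := by
  unfold qZ
  monicity!

private lemma qZ_irred : Irreducible qZ := by
  apply irreducible_of_eisenstein_criterion (P := Ideal.span {(17 : ℤ)})
  · rw [Ideal.span_singleton_prime (by norm_num)]
    norm_num
  · rw [qZ_monic.leadingCoeff, Ideal.mem_span_singleton]
    norm_num
  · intro n hn
    rw [Polynomial.degree_eq_natDegree qZ_monic.ne_zero, qZ_natDegree] at hn
    have hn4 : n < 4 := by exact_mod_cast hn
    rw [Ideal.mem_span_singleton]
    interval_cases n <;> simp [qZ, coeff_X_pow] <;> norm_num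
  · rw [Polynomial.degree_eq_natDegree qZ_monic.ne_zero, qZ_natDegree]; norm_num
  · rw [Ideal.span_singleton_pow, Ideal.mem_span_singleton]
    simp [qZ, coeff_X_pow]
  · exact qZ_monic.isPrimitive

private lemma qQ_eq_map : qQ = qZ.map (algebraMap ℤ ℚ) := by
  simp only [qQ, qZ, Polynomial.map_add, Polynomial.map_pow, Polynomial.map_mul,
    Polynomial.map_X, map_C]
  norm_num

private lemma qQ_irred : Irreducible qQ := by
  rw [qQ_eq_map]
  exact (qZ_monic.isPrimitive.irreducible_iff_irreducible_map_fraction_map).mp qZ_irred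

private lemma qQ_monic : qQ.Monic := by
  unfold qQ; monicity!

end
noncomputable section
open Polynomial IntermediateField

private lemma qQ_natDegree : qQ.natDegree = 4 := by
  unfold qQ; compute_degree!

private lemma cs_sq : ((Real.sqrt 17 : ℝ) : ℂ) ^ 2 = 17 := by
  norm_cast
  rw [Real.sq_sqrt] <;> norm_num

variable {α : ℂ} (hα : α ^ 2 = -((17 : ℂ) + (Real.sqrt 17 : ℝ)))
include hα

private lemma aeval_qQ : aeval α qQ = 0 := by
  have hs := cs_sq
  simp only [qQ, map_add, map_pow, map_mul, aeval_X, aeval_C, map_ofNat]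
  push_cast
  linear_combination (α ^ 2 + 17 - ((Real.sqrt 17 : ℝ) : ℂ)) * hα + hs

private lemma minpoly_α : minpoly ℚ α = qQ :=
  (minpoly.eq_of_irreducible_of_monic qQ_irred (aeval_qQ hα) qQ_monic).symm

private lemma integral_α : IsIntegral ℚ α :=
  ⟨qQ, qQ_monic, by rw [← Polynomial.aeval_def]; exact aeval_qQ hα⟩

private lemma finrank_Kα : Module.finrank ℚ (adjoin ℚ {α}) = 4 := by
  rw [IntermediateField.adjoin.finrank (integral_α hα), minpoly_α hα, qQ_natDegree]

end
noncomputable section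
open Polynomial IntermediateField

variable {α : ℂ} (hα : α ^ 2 = -((17 : ℂ) + (Real.sqrt 17 : ℝ)))

private lemma cs_ne_five : ((Real.sqrt 17 : ℝ) : ℂ) ≠ 5 := by
  intro h; have := cs_sq; rw [h] at this; norm_num at this

private lemma cs_ne_neg_three : ((Real.sqrt 17 : ℝ) : ℂ) ≠ -3 := by
  intro h; have := cs_sq; rw [h] at this; norm_num at this

private lemma cs_ne_seventeen : ((Real.sqrt 17 : ℝ) : ℂ) ≠ 17 := by
  intro h; have := cs_sq; rw [h] at this; norm_num at this

include hα

private lemma α_ne_zero : α ≠ 0 := by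
  intro h
  rw [h] at hα
  have := cs_sq
  have h2 : ((Real.sqrt 17 : ℝ) : ℂ) = -17 := by linear_combination hα
  rw [h2] at this; norm_num at this

private lemma b_sq : (α * (((Real.sqrt 17 : ℝ) : ℂ) - 1) / 4) ^ 2
    = ((Real.sqrt 17 : ℝ) : ℂ) - 17 := by
  linear_combination ((((Real.sqrt 17 : ℝ) : ℂ) - 1) ^ 2 / 16) * hα
    - ((((Real.sqrt 17 : ℝ) : ℂ) + 15) / 16) * cs_sq

private lemma b_ne_α : α * (((Real.sqrt 17 : ℝ) : ℂ) - 1) / 4 ≠ α := by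
  intro h
  apply cs_ne_five
  have hα0 := α_ne_zero hα
  have h2 : (((Real.sqrt 17 : ℝ) : ℂ) - 5) * α = 0 := by linear_combination 4 * h
  rcases mul_eq_zero.mp h2 with h' | h'
  · linear_combination h'
  · exact absurd h' hα0

private lemma b_ne_neg_α : α * (((Real.sqrt 17 : ℝ) : ℂ) - 1) / 4 ≠ -α := by
  intro h
  apply cs_ne_neg_three
  have hα0 := α_ne_zero hα
  have h2 : (((Real.sqrt 17 : ℝ) : ℂ) + 3) * α = 0 := by linear_combination 4 * h
  rcases mul_eq_zero.mp h2 with h' | h'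
  · linear_combination h'
  · exact absurd h' hα0

private lemma b_ne_zero : α * (((Real.sqrt 17 : ℝ) : ℂ) - 1) / 4 ≠ 0 := by
  intro h
  apply cs_ne_seventeen
  have := b_sq hα
  rw [h] at this
  linear_combination -this

private lemma sum_sq : α ^ 2 + (α * (((Real.sqrt 17 : ℝ) : ℂ) - 1) / 4) ^ 2 = -34 := by
  rw [b_sq hα, hα]; ring

private lemma prod_sq : α ^ 2 * (α * (((Real.sqrt 17 : ℝ) : ℂ) - 1) / 4) ^ 2 = 272 := by
  rw [b_sq hα, hα]
  linear_combination (17 : ℂ) - cs_sq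

end
noncomputable section
open Polynomial IntermediateField

variable {α : ℂ} (hα : α ^ 2 = -((17 : ℂ) + (Real.sqrt 17 : ℝ)))
include hα

private lemma cs_mem : ((Real.sqrt 17 : ℝ) : ℂ) ∈ adjoin ℚ {α} := by
  have hmem : α ∈ adjoin ℚ {α} := mem_adjoin_simple_self ℚ α
  have h : ((Real.sqrt 17 : ℝ) : ℂ) = -α ^ 2 - 17 := by linear_combination hα
  rw [h]
  exact sub_mem (neg_mem (pow_mem hmem 2)) (ofNat_mem _ 17)

private lemma b_mem : α * (((Real.sqrt 17 : ℝ) : ℂ) - 1) / 4 ∈ adjoin ℚ {α} := by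
  have hmem : α ∈ adjoin ℚ {α} := mem_adjoin_simple_self ℚ α
  exact div_mem (mul_mem hmem (sub_mem (cs_mem hα) (one_mem _))) (ofNat_mem _ 4)

private lemma factor (x : ℂ) : x ^ 4 + 34 * x ^ 2 + 272 =
    (x - α) * (x + α) * (x - α * (((Real.sqrt 17 : ℝ) : ℂ) - 1) / 4)
      * (x + α * (((Real.sqrt 17 : ℝ) : ℂ) - 1) / 4) := by
  linear_combination x ^ 2 * sum_sq hα - prod_sq hα

private lemma aeval_qQ_eq (x : ℂ) : aeval x qQ = x ^ 4 + 34 * x ^ 2 + 272 := by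
  simp only [qQ, map_add, map_pow, map_mul, aeval_X, aeval_C, map_ofNat]

omit hα in
private lemma qQ_ne_zero : qQ ≠ 0 := qQ_monic.ne_zero

private lemma mem_A_of_root : ∀ x ∈ qQ.rootSet ℂ, x ∈ adjoin ℚ {α} := by
  intro x hx
  rw [mem_rootSet] at hx
  have h0 := hx.2
  rw [aeval_qQ_eq hα, factor hα] at h0
  have hmem : α ∈ adjoin ℚ {α} := mem_adjoin_simple_self ℚ α
  rcases mul_eq_zero.mp h0 with h | h
  · rcases mul_eq_zero.mp h with h | h
    · rcases mul_eq_zero.mp h with h | h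
      · rw [sub_eq_zero.mp h]; exact hmem
      · rw [eq_neg_of_add_eq_zero_left h]; exact neg_mem hmem
    · rw [sub_eq_zero.mp h]; exact b_mem hα
  · rw [eq_neg_of_add_eq_zero_left h]; exact neg_mem (b_mem hα)

private lemma α_mem_rootSet : α ∈ qQ.rootSet ℂ := by
  rw [mem_rootSet]
  exact ⟨qQ_ne_zero, aeval_qQ hα⟩

private lemma adjoin_rootSet_eq : adjoin ℚ (qQ.rootSet ℂ) = adjoin ℚ {α} :=
  le_antisymm (adjoin_le_iff.mpr (mem_A_of_root hα))
    (adjoin_le_iff.mpr (Set.singleton_subset_iff.mpr (subset_adjoin ℚ _ (α_mem_rootSet hα))))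

private lemma isSplittingField_A : IsSplittingField ℚ (adjoin ℚ {α}) qQ := by
  have h := adjoin_rootSet_isSplittingField (K := ℚ) (L := ℂ) (p := qQ)
    (IsAlgClosed.splits _)
  rwa [adjoin_rootSet_eq hα] at h

private lemma isGalois_A : IsGalois ℚ (adjoin ℚ {α}) :=
  have := isSplittingField_A hα
  IsGalois.of_separable_splitting_field (p := qQ) qQ_irred.separable

end
noncomputable section
open Polynomial IntermediateField

variable {α : ℂ} (hα : α ^ 2 = -((17 : ℂ) + (Real.sqrt 17 : ℝ)))
include hα

private lemma finiteDimensional_A : FiniteDimensional ℚ (adjoin ℚ {α}) :=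
  IntermediateField.adjoin.finiteDimensional (integral_α hα)

/-- the generator as an element of the field -/
private def aK : adjoin ℚ {α} := AdjoinSimple.gen ℚ α

/-- `b` as an element of the field -/
private def bK : adjoin ℚ {α} := ⟨α * (((Real.sqrt 17 : ℝ) : ℂ) - 1) / 4, b_mem hα⟩

private lemma aeval_bK : aeval (bK hα) (minpoly ℚ α) = 0 := by
  have hinj : Function.Injective (algebraMap (adjoin ℚ {α}) ℂ) :=
    (algebraMap (adjoin ℚ {α}) ℂ).injective
  apply hinj
  rw [map_zero, ← Polynomial.aeval_algebraMap_apply]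
  rw [minpoly_α hα]
  show aeval (α * (((Real.sqrt 17 : ℝ) : ℂ) - 1) / 4) qQ = 0
  rw [aeval_qQ_eq hα, factor hα]
  ring

private lemma bK_mem_aroots : bK hα ∈ (minpoly ℚ α).aroots (adjoin ℚ {α}) := by
  rw [Polynomial.mem_aroots]
  refine ⟨by rw [minpoly_α hα]; exact qQ_ne_zero, aeval_bK hα⟩

/-- the order-4 automorphism, as an `AlgHom` -/
private def σA : (adjoin ℚ {α}) →ₐ[ℚ] (adjoin ℚ {α}) :=
  (algHomAdjoinIntegralEquiv ℚ (integral_α hα)).symm ⟨bK hα, bK_mem_aroots hα⟩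

private lemma σA_gen : σA hα (aK) = bK hα :=
  algHomAdjoinIntegralEquiv_symm_apply_gen ℚ (integral_α hα) _

/-- the order-4 automorphism -/
private def σ : (adjoin ℚ {α}) ≃ₐ[ℚ] (adjoin ℚ {α}) :=
  have := finiteDimensional_A hα
  AlgEquiv.ofBijective (σA hα) (σA hα).bijective

private lemma σ_gen : σ hα (aK) = bK hα := σA_gen hα

end
noncomputable section
open Polynomial IntermediateField

variable {α : ℂ} (hα : α ^ 2 = -((17 : ℂ) + (Real.sqrt 17 : ℝ)))

private lemma coe_aK : ((aK : adjoin ℚ {α}) : ℂ) = α := rfl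

include hα

private lemma bK_poly : bK hα = aK * (-(aK ^ 2) - 18) / 4 := by
  apply Subtype.ext
  push_cast
  show α * (((Real.sqrt 17 : ℝ) : ℂ) - 1) / 4 = α * (-(α ^ 2) - 18) / 4
  linear_combination (α / 4) * hα

private lemma σ_σ_aK : σ hα (σ hα aK) = -aK := by
  rw [σ_gen hα, bK_poly hα, map_div₀, map_mul, map_sub, map_neg, map_pow, σ_gen hα, map_ofNat, map_ofNat]
  apply Subtype.ext
  push_cast
  show (α * (((Real.sqrt 17 : ℝ) : ℂ) - 1) / 4) *
      (-((α * (((Real.sqrt 17 : ℝ) : ℂ) - 1) / 4) ^ 2) - 18) / 4 = -α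
  linear_combination (-α * (((Real.sqrt 17 : ℝ) : ℂ) - 1) ^ 3 / 256) * hα +
    (α * ((((Real.sqrt 17 : ℝ) : ℂ)) ^ 2 + 14 * (((Real.sqrt 17 : ℝ) : ℂ)) - 31) / 256) * cs_sq

private lemma σ_sq_aK : (σ hα ^ 2) aK = -aK := by
  rw [pow_two, AlgEquiv.mul_apply, σ_σ_aK hα]

private lemma σ_sq_ne_one : σ hα ^ 2 ≠ 1 := by
  intro h
  have h2 := σ_sq_aK hα
  rw [h] at h2
  have h3 : α = -α := by
    have := congrArg (Subtype.val) h2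
    simpa [coe_aK] using this
  exact α_ne_zero hα (by linear_combination h3 / 2)

private lemma card_G : Nat.card ((adjoin ℚ {α}) ≃ₐ[ℚ] (adjoin ℚ {α})) = 4 := by
  have := finiteDimensional_A hα
  have := isGalois_A hα
  rw [IsGalois.card_aut_eq_finrank, finrank_Kα hα]

private lemma orderOf_σ : orderOf (σ hα) = 4 := by
  have := finiteDimensional_A hα
  have hdvd : orderOf (σ hα) ∣ 4 := card_G hα ▸ orderOf_dvd_natCard (σ hα)
  have hdvd' : orderOf (σ hα) ∣ 2 ^ 2 := by norm_num at hdvd ⊢; exact hdvd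
  obtain ⟨i, hi, h⟩ := (Nat.dvd_prime_pow Nat.prime_two).mp hdvd'
  interval_cases i
  · exfalso
    apply σ_sq_ne_one hα
    have h1 : σ hα = 1 := orderOf_eq_one_iff.mp (by simpa using h)
    rw [h1, one_pow]
  · exfalso
    apply σ_sq_ne_one hα
    rw [pow_one] at h
    rw [← h]
    exact pow_orderOf_eq_one _
  · rw [h]; norm_num

private lemma isCyclic_G : IsCyclic ((adjoin ℚ {α}) ≃ₐ[ℚ] (adjoin ℚ {α})) := by
  have := finiteDimensional_A hα
  have : Finite ((adjoin ℚ {α}) ≃ₐ[ℚ] (adjoin ℚ {α})) := by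
    have : Fintype ((adjoin ℚ {α}) ≃ₐ[ℚ] (adjoin ℚ {α})) := AlgEquiv.fintype ℚ _
    exact Finite.of_fintype _
  exact isCyclic_of_orderOf_eq_card (σ hα) (by rw [orderOf_σ hα, card_G hα])

end
noncomputable section
open Polynomial IntermediateField

variable {α : ℂ} (hα : α ^ 2 = -((17 : ℂ) + (Real.sqrt 17 : ℝ)))
include hα

private lemma α_re : α.re = 0 := by
  have h1 := congrArg Complex.re hα
  have h2 := congrArg Complex.im hα
  simp [pow_two, Complex.mul_re, Complex.mul_im, Complex.add_re, Complex.add_im,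
    Complex.ofReal_re, Complex.ofReal_im] at h1 h2
  rcases mul_eq_zero.mp (by linarith : α.re * α.im = 0) with h | h
  · exact h
  · exfalso
    rw [h] at h1
    nlinarith [Real.sqrt_nonneg 17, sq_nonneg α.re]

private lemma conj_α : (starRingEnd ℂ) α = -α := by
  apply Complex.ext <;> simp [α_re hα]

private lemma σ_sq_conj (x : adjoin ℚ {α}) :
    (((σ hα ^ 2) x : ℂ)) = (starRingEnd ℂ) (x : ℂ) := by
  have := finiteDimensional_A hα
  let f : (adjoin ℚ {α}) →ₐ[ℚ] ℂ :=
    ((adjoin ℚ {α}).val).comp (σ hα ^ 2).toAlgHom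
  let g : (adjoin ℚ {α}) →ₐ[ℚ] ℂ :=
    ((Complex.conjAe.restrictScalars ℚ).toAlgHom).comp ((adjoin ℚ {α}).val)
  have hfg : f = g := by
    apply algHom_ext_of_eq_adjoin ℚ (rfl : adjoin ℚ {α} = adjoin ℚ {α})
    intro y hy
    rcases Set.mem_singleton_iff.mp hy with rfl
    show ((σ hα ^ 2) aK : ℂ) = (starRingEnd ℂ) y
    rw [σ_sq_aK hα, conj_α hα]
    rfl
  have := congrArg (fun h => h x) hfg
  exact this

private lemma eq_σ_sq_of_order_two {τ : (adjoin ℚ {α}) ≃ₐ[ℚ] (adjoin ℚ {α})}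
    (h1 : τ ≠ 1) (h2 : τ ^ 2 = 1) : τ = σ hα ^ 2 := by
  have := finiteDimensional_A hα
  have hfin : Finite ((adjoin ℚ {α}) ≃ₐ[ℚ] (adjoin ℚ {α})) := by
    have : Fintype ((adjoin ℚ {α}) ≃ₐ[ℚ] (adjoin ℚ {α})) := AlgEquiv.fintype ℚ _
    exact Finite.of_fintype _
  set g := σ hα with hg
  have htop : Subgroup.zpowers g = ⊤ := by
    apply Subgroup.eq_top_of_card_eq
    rw [Nat.card_zpowers, orderOf_σ hα, card_G hα]
  have hτ : τ ∈ Subgroup.zpowers g := htop ▸ Subgroup.mem_top τ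
  obtain ⟨k, hk⟩ := Subgroup.mem_zpowers_iff.mp hτ
  have h2k : g ^ (2 * k) = 1 := by
    rw [mul_comm, zpow_mul, hk]
    exact_mod_cast h2
  have hdvd : ((orderOf g : ℤ)) ∣ 2 * k := orderOf_dvd_iff_zpow_eq_one.mpr h2k
  rw [orderOf_σ hα] at hdvd
  have hk2 : (2 : ℤ) ∣ k := by omega
  obtain ⟨m, rfl⟩ := hk2
  have h4 : g ^ (4 : ℤ) = 1 := by
    have := pow_orderOf_eq_one g
    rw [orderOf_σ hα] at this
    exact_mod_cast this
  rcases Int.even_or_odd m with ⟨q, hq⟩ | ⟨q, hq⟩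
  · exfalso
    apply h1
    rw [← hk, hq, show (2 : ℤ) * (q + q) = 4 * q by ring, zpow_mul, h4, one_zpow]
  · rw [← hk, hq, show (2 : ℤ) * (2 * q + 1) = 4 * q + 2 by ring, zpow_add, zpow_mul, h4,
      one_zpow, one_mul]
    rw [show (2 : ℤ) = ((2 : ℕ) : ℤ) by norm_num, zpow_natCast]

end
noncomputable section
open Polynomial IntermediateField

variable {α : ℂ} (hα : α ^ 2 = -((17 : ℂ) + (Real.sqrt 17 : ℝ)))
include hα

/-- `√17` as an element of `K` -/
private def csK : adjoin ℚ {α} := ⟨((Real.sqrt 17 : ℝ) : ℂ), cs_mem hα⟩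

private lemma aeval_csK : aeval (csK hα) ((X : ℚ[X]) ^ 2 - C 17) = 0 := by
  apply (algebraMap (adjoin ℚ {α}) ℂ).injective
  rw [map_zero, ← Polynomial.aeval_algebraMap_apply]
  show aeval ((Real.sqrt 17 : ℝ) : ℂ) ((X : ℚ[X]) ^ 2 - C 17) = 0
  simp only [map_sub, map_pow, aeval_X, aeval_C]
  rw [show ((algebraMap ℚ ℂ) 17) = (17 : ℂ) by norm_num]
  linear_combination cs_sq

private lemma csK_not_bot : csK hα ∉ (algebraMap ℚ (adjoin ℚ {α})).range := by
  rintro ⟨q, hq⟩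
  have : ((Real.sqrt 17 : ℝ) : ℂ) = ((q : ℚ) : ℂ) := by
    have := congrArg (fun y : adjoin ℚ {α} => (y : ℂ)) hq
    simp at this
    exact this.symm
  have h17 : Irrational (Real.sqrt 17) := Nat.Prime.irrational_sqrt (by norm_num)
  apply h17
  refine ⟨q, ?_⟩
  exact_mod_cast this.symm

private lemma minpoly_csK_natDegree : (minpoly ℚ (csK hα)).natDegree = 2 := by
  have hint : IsIntegral ℚ (csK hα) := ⟨(X : ℚ[X]) ^ 2 - C 17, by monicity!,
    by rw [← Polynomial.aeval_def]; exact aeval_csK hα⟩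
  have hdvd : minpoly ℚ (csK hα) ∣ (X : ℚ[X]) ^ 2 - C 17 := minpoly.dvd ℚ _ (aeval_csK hα)
  have hd2 : ((X : ℚ[X]) ^ 2 - C 17).natDegree = 2 := by compute_degree!
  have hne : ((X : ℚ[X]) ^ 2 - C 17) ≠ 0 := by
    intro h
    rw [h, natDegree_zero] at hd2
    norm_num at hd2
  have hle : (minpoly ℚ (csK hα)).natDegree ≤ 2 := by
    have := Polynomial.natDegree_le_of_dvd hdvd hne
    rwa [hd2] at this
  have hpos : 0 < (minpoly ℚ (csK hα)).natDegree := minpoly.natDegree_pos hint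
  have hne1 : (minpoly ℚ (csK hα)).natDegree ≠ 1 := by
    intro h1
    apply csK_not_bot hα
    rw [← minpoly.degree_eq_one_iff]
    rw [Polynomial.degree_eq_natDegree (minpoly.ne_zero hint), h1]
    rfl
  omega

private lemma finrank_E_sqrt :
    Module.finrank ℚ (↥(adjoin ℚ {csK hα} : IntermediateField ℚ (adjoin ℚ {α}))) = 2 := by
  have hint : IsIntegral ℚ (csK hα) := ⟨(X : ℚ[X]) ^ 2 - C 17, by monicity!,
    by rw [← Polynomial.aeval_def]; exact aeval_csK hα⟩
  rw [IntermediateField.adjoin.finrank hint, minpoly_csK_natDegree hα]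

end
noncomputable section
open Polynomial IntermediateField

variable {α : ℂ} (hα : α ^ 2 = -((17 : ℂ) + (Real.sqrt 17 : ℝ)))
include hα

private lemma finrank_top_of_two (E₁ : IntermediateField ℚ (adjoin ℚ {α}))
    (hE : Module.finrank ℚ (↥E₁) = 2) :
    Module.finrank (↥E₁) (adjoin ℚ {α}) = 2 := by
  have hfd := finiteDimensional_A hα
  have hmul : Module.finrank ℚ (↥E₁) * Module.finrank (↥E₁) (adjoin ℚ {α}) =
      Module.finrank ℚ (adjoin ℚ {α}) := Module.finrank_mul_finrank ℚ (↥E₁) (adjoin ℚ {α})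
  rw [hE, finrank_Kα hα] at hmul
  omega

private lemma tau_is_conj (E₁ : IntermediateField ℚ (adjoin ℚ {α}))
    (τ : (adjoin ℚ {α}) ≃ₐ[↥E₁] (adjoin ℚ {α})) (hτ1 : τ ≠ 1) (hτ2 : τ * τ = 1)
    (y : adjoin ℚ {α}) : ((τ y : ℂ)) = (starRingEnd ℂ) (y : ℂ) := by
  have hfd := finiteDimensional_A hα
  set τ' : (adjoin ℚ {α}) ≃ₐ[ℚ] (adjoin ℚ {α}) := τ.restrictScalars ℚ with hτ'def
  have hτ'1 : τ' ≠ 1 := by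
    intro h
    apply hτ1
    apply AlgEquiv.ext
    intro z
    exact AlgEquiv.ext_iff.mp h z
  have hτ'2 : τ' ^ 2 = 1 := by
    apply AlgEquiv.ext
    intro z
    rw [pow_two]
    exact AlgEquiv.ext_iff.mp hτ2 z
  have heq : τ' = σ hα ^ 2 := eq_σ_sq_of_order_two hα hτ'1 hτ'2
  have : τ y = τ' y := rfl
  rw [this, heq, σ_sq_conj hα]

private lemma norm_ne_neg_one (E₁ : IntermediateField ℚ (adjoin ℚ {α}))
    (hE : Module.finrank ℚ (↥E₁) = 2) (x : adjoin ℚ {α}) :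
    Algebra.norm (↥E₁) x ≠ (-1 : ↥E₁) := by
  classical
  have hfd := finiteDimensional_A hα
  have hgal := isGalois_A hα
  intro hx
  have hcard : Nat.card ((adjoin ℚ {α}) ≃ₐ[↥E₁] (adjoin ℚ {α})) = 2 := by
    rw [IsGalois.card_aut_eq_finrank,
      finrank_top_of_two hα E₁ hE]
  obtain ⟨τ, hτ1, hτu⟩ :=
    (Nat.card_eq_two_iff' (1 : (adjoin ℚ {α}) ≃ₐ[↥E₁] (adjoin ℚ {α}))).mp hcard
  have hτ2 : τ * τ = 1 := by
    have h := pow_card_eq_one' (x := τ)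
    rw [hcard, pow_two] at h
    exact h
  have huniv : (Finset.univ : Finset ((adjoin ℚ {α}) ≃ₐ[↥E₁] (adjoin ℚ {α}))) = {1, τ} := by
    symm
    apply Finset.eq_of_subset_of_card_le (Finset.subset_univ _)
    rw [Finset.card_univ, ← Nat.card_eq_fintype_card, hcard,
      Finset.card_insert_of_notMem (by simpa using hτ1.symm), Finset.card_singleton]
  have hnorm := Algebra.norm_eq_prod_automorphisms (K := ↥E₁) x
  rw [hx, map_neg, map_one, huniv, Finset.prod_pair (Ne.symm hτ1)] at hnorm
  have hC : (-1 : ℂ) = (x : ℂ) * (starRingEnd ℂ) (x : ℂ) := by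
    have := congrArg (fun z : adjoin ℚ {α} => (z : ℂ)) hnorm
    simp only [AlgEquiv.one_apply] at this
    push_cast at this
    rw [← tau_is_conj hα E₁ τ hτ1 hτ2 x]
    exact this
  rw [Complex.mul_conj] at hC
  have : (-1 : ℝ) = Complex.normSq (x : ℂ) := by exact_mod_cast hC
  nlinarith [Complex.normSq_nonneg (x : ℂ)]

end
noncomputable section
open Polynomial IntermediateField

variable {α : ℂ} (hα : α ^ 2 = -((17 : ℂ) + (Real.sqrt 17 : ℝ)))
include hα

private lemma subgroup_card_two (H : Subgroup ((adjoin ℚ {α}) ≃ₐ[ℚ] (adjoin ℚ {α})))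
    (h : Nat.card H = 2) : H = Subgroup.zpowers (σ hα ^ 2) := by
  have hfd := finiteDimensional_A hα
  have hfin : Finite ((adjoin ℚ {α}) ≃ₐ[ℚ] (adjoin ℚ {α})) := by
    have : Fintype ((adjoin ℚ {α}) ≃ₐ[ℚ] (adjoin ℚ {α})) := AlgEquiv.fintype ℚ _
    exact Finite.of_fintype _
  have key : ∀ g ∈ H, g ≠ 1 → g = σ hα ^ 2 := by
    intro g hg hg1
    apply eq_σ_sq_of_order_two hα hg1
    apply orderOf_dvd_iff_pow_eq_one.mp
    have := Subgroup.orderOf_dvd_natCard H hg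
    rwa [h] at this
  have hnt : Nontrivial H := Finite.one_lt_card_iff_nontrivial.mp (by omega)
  obtain ⟨g, hgH, hg1⟩ := Subgroup.exists_ne_one_of_nontrivial H
  have hσ2 : σ hα ^ 2 ∈ H := key g hgH hg1 ▸ hgH
  apply le_antisymm
  · intro u hu
    by_cases h1 : u = 1
    · rw [h1]; exact Subgroup.one_mem _
    · rw [key u hu h1]; exact Subgroup.mem_zpowers _
  · rw [Subgroup.zpowers_le]
    exact hσ2

private lemma eq_sqrt_field (E₁ : IntermediateField ℚ (adjoin ℚ {α}))
    (hE : Module.finrank ℚ (↥E₁) = 2) :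
    E₁ = adjoin ℚ {csK hα} := by
  classical
  have hfd := finiteDimensional_A hα
  have hgal := isGalois_A hα
  have key : ∀ E : IntermediateField ℚ (adjoin ℚ {α}), Module.finrank ℚ (↥E) = 2 →
      IntermediateField.fixingSubgroup E = Subgroup.zpowers (σ hα ^ 2) := by
    intro E hE2
    apply subgroup_card_two hα
    rw [IsGalois.card_fixingSubgroup_eq_finrank,
      finrank_top_of_two hα E hE2]
  have h1 := key E₁ hE
  have h2 := key (adjoin ℚ {csK hα}) (finrank_E_sqrt hα)
  have h3 := congrArg IntermediateField.fixedField (h1.trans h2.symm)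
  rwa [IsGalois.fixedField_fixingSubgroup, IsGalois.fixedField_fixingSubgroup] at h3

private lemma unique_quadratic (E : IntermediateField ℚ ℂ) (hle : E ≤ adjoin ℚ {α})
    (h2 : Module.finrank ℚ (↥E) = 2) :
    E = adjoin ℚ {((Real.sqrt 17 : ℝ) : ℂ)} := by
  classical
  set E' : IntermediateField ℚ (adjoin ℚ {α}) :=
    IntermediateField.comap (adjoin ℚ {α}).val E with hE'def
  have hlift : IntermediateField.lift E' = E := by
    apply le_antisymm
    · rintro z ⟨y, hy, rfl⟩
      exact hy
    · intro z hz
      exact ⟨⟨z, hle hz⟩, hz, rfl⟩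
  have hfr : Module.finrank ℚ (↥E') = 2 := by
    have heq := (IntermediateField.liftAlgEquiv E').toLinearEquiv.finrank_eq
    rw [hlift] at heq
    exact heq.trans h2
  have h3 := eq_sqrt_field hα E' hfr
  have hl := congrArg IntermediateField.lift h3
  rw [hlift] at hl
  rw [hl]
  convert IntermediateField.lift_adjoin_simple (F := ℚ) (adjoin ℚ {α}) (csK hα)
  · congr 1
  · rfl

end
noncomputable section
open Polynomial IntermediateField

variable {α : ℂ} (hα : α ^ 2 = -((17 : ℂ) + (Real.sqrt 17 : ℝ)))
include hα

private lemma σ_cube_aK : (σ hα ^ 3) aK = -(bK hα) := by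
  have : σ hα ^ 3 = σ hα * σ hα ^ 2 := by group
  rw [this, AlgEquiv.mul_apply, σ_sq_aK hα, map_neg, σ_gen hα]

private lemma normQ_ne_neg_one (x : adjoin ℚ {α}) : Algebra.norm ℚ x ≠ (-1 : ℚ) := by
  classical
  have hfd := finiteDimensional_A hα
  have hgal := isGalois_A hα
  intro hx
  set g := σ hα with hgdef
  have hne : ∀ u v : (adjoin ℚ {α}) ≃ₐ[ℚ] (adjoin ℚ {α}),
      ((u aK : ℂ)) ≠ ((v aK : ℂ)) → u ≠ v := by
    intro u v h e
    rw [e] at h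
    exact h rfl
  have w0 : ((1 : (adjoin ℚ {α}) ≃ₐ[ℚ] (adjoin ℚ {α})) aK : ℂ) = α := rfl
  have w1 : ((g aK : ℂ)) = α * (((Real.sqrt 17 : ℝ) : ℂ) - 1) / 4 := by
    rw [σ_gen hα]; rfl
  have w2 : (((g ^ 2) aK : ℂ)) = -α := by
    rw [σ_sq_aK hα]; push_cast [coe_aK]; rfl
  have w3 : (((g ^ 3) aK : ℂ)) = -(α * (((Real.sqrt 17 : ℝ) : ℂ) - 1) / 4) := by
    rw [σ_cube_aK hα]; push_cast; rfl
  have hb0 := b_ne_zero hα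
  have ha0 := α_ne_zero hα
  have hba := b_ne_α hα
  have hbna := b_ne_neg_α hα
  have n01 : (1 : (adjoin ℚ {α}) ≃ₐ[ℚ] (adjoin ℚ {α})) ≠ g := by
    apply hne; rw [w0, w1]; exact fun h => hba h.symm
  have n02 : (1 : (adjoin ℚ {α}) ≃ₐ[ℚ] (adjoin ℚ {α})) ≠ g ^ 2 := by
    apply hne; rw [w0, w2]; intro h; exact ha0 (by linear_combination h / 2)
  have n03 : (1 : (adjoin ℚ {α}) ≃ₐ[ℚ] (adjoin ℚ {α})) ≠ g ^ 3 := by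
    apply hne; rw [w0, w3]; intro h; apply hbna; linear_combination h
  have n12 : g ≠ g ^ 2 := by
    apply hne; rw [w1, w2]; exact hbna
  have n13 : g ≠ g ^ 3 := by
    apply hne; rw [w1, w3]; intro h; exact hb0 (by linear_combination h / 2)
  have n23 : g ^ 2 ≠ g ^ 3 := by
    apply hne; rw [w2, w3]; intro h; apply hba; linear_combination h
  have huniv : (Finset.univ : Finset ((adjoin ℚ {α}) ≃ₐ[ℚ] (adjoin ℚ {α})))
      = {1, g, g ^ 2, g ^ 3} := by
    symm
    apply Finset.eq_of_subset_of_card_le (Finset.subset_univ _)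
    rw [Finset.card_univ, ← Nat.card_eq_fintype_card, card_G hα]
    rw [Finset.card_insert_of_notMem (by simp [n01, n02, n03]),
      Finset.card_insert_of_notMem (by simp [n12, n13]),
      Finset.card_insert_of_notMem (by simp [n23]), Finset.card_singleton]
  have hnorm := Algebra.norm_eq_prod_automorphisms (K := ℚ) x
  rw [hx, map_neg, map_one, huniv] at hnorm
  rw [Finset.prod_insert (by simp [n01, n02, n03]),
    Finset.prod_insert (by simp [n12, n13]),
    Finset.prod_insert (by simp [n23]), Finset.prod_singleton] at hnorm
  have hC := congrArg (fun z : adjoin ℚ {α} => (z : ℂ)) hnorm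
  simp only [AlgEquiv.one_apply] at hC
  push_cast at hC
  have hg3 : (((g ^ 3) x : ℂ)) = (starRingEnd ℂ) ((g x : ℂ)) := by
    have h33 : g ^ 3 = g ^ 2 * g := by group
    rw [h33, AlgEquiv.mul_apply, σ_sq_conj hα]
  have hg2 : (((g ^ 2) x : ℂ)) = (starRingEnd ℂ) ((x : ℂ)) := σ_sq_conj hα x
  rw [hg2, hg3] at hC
  have hC2 : (-1 : ℂ) = ((x : ℂ) * (starRingEnd ℂ) (x : ℂ)) *
      ((g x : ℂ) * (starRingEnd ℂ) ((g x : ℂ))) := by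
    rw [hC]; ring
  rw [Complex.mul_conj, Complex.mul_conj] at hC2
  have : (-1 : ℝ) = Complex.normSq (x : ℂ) * Complex.normSq ((g x : ℂ)) := by
    exact_mod_cast hC2
  nlinarith [Complex.normSq_nonneg (x : ℂ), Complex.normSq_nonneg ((g x : ℂ))]

end

/-- Let `√17` be the positive real square root of `17` and let
`K = ℚ(α) ⊆ ℂ` where `α² = −(17 + √17)`.  Then `K/ℚ` is a Galois extension of degree
`4` with cyclic Galois group; `√17 ∈ K` and `ℚ(√17)` is the unique quadratic subfield
of `K`; and `−1 ∉ N_{K/ℚ(√17)}(K×)` (stated for every quadratic subfield of `K`, there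
being exactly one).  Moreover `−1 ∉ N_{K/ℚ}(K×)`.  Consequently `m(K/ℚ) = 1` for this
tower `ℚ ⊂ ℚ(√17) ⊂ K` (with `p = 2`). -/
theorem statement14 (α : ℂ) (hα : α ^ 2 = -((17 : ℂ) + (Real.sqrt 17 : ℝ)))
    (K : IntermediateField ℚ ℂ) (hK : K = IntermediateField.adjoin ℚ {α}) :
    IsGalois ℚ (↥K) ∧
    Module.finrank ℚ (↥K) = 4 ∧
    IsCyclic ((↥K) ≃ₐ[ℚ] (↥K)) ∧
    ((Real.sqrt 17 : ℝ) : ℂ) ∈ K ∧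
    (∀ E : IntermediateField ℚ ℂ, E ≤ K → Module.finrank ℚ (↥E) = 2 →
      E = IntermediateField.adjoin ℚ {((Real.sqrt 17 : ℝ) : ℂ)}) ∧
    (∃ E₁ : IntermediateField ℚ (↥K), Module.finrank ℚ (↥E₁) = 2) ∧
    (∀ E₁ : IntermediateField ℚ (↥K), Module.finrank ℚ (↥E₁) = 2 →
      ¬ ∃ x : ↥K, Algebra.norm (↥E₁) x = (-1 : ↥E₁)) ∧
    (¬ ∃ x : ↥K, Algebra.norm ℚ x = (-1 : ℚ)) := by
  subst hK
  refine ⟨isGalois_A hα, finrank_Kα hα, isCyclic_G hα, cs_mem hα, ?_, ?_, ?_, ?_⟩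
  · intro E hle h2
    exact unique_quadratic hα E hle h2
  · exact ⟨IntermediateField.adjoin ℚ {csK hα}, finrank_E_sqrt hα⟩
  · rintro E₁ hE ⟨x, hx⟩
    exact norm_ne_neg_one hα E₁ hE x hx
  · rintro ⟨x, hx⟩
    exact normQ_ne_neg_one hα x hx
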